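/- For all complex x, y with |x| < 1/(1−q) and |y| < 1/(1−q), the series ∑_{n=0}^∞ (x ⊕_q y)^{2n}/[2n]_q! converges absolutely and equals cosh_q(x) cosh_q(y) + sinh_q(x) sinh_q(y). -/

import Mathlib

open Finset Filter Topology

/-- The q-number `[n]_q = (1 - q^n)/(1 - q)`. -/
noncomputable def qNum (q : ℝ) (n : ℕ) : ℝ := (1 - q ^ n) / (1 - q)

/-- The q-factorial `[n]_q! = ∏_{k=1}^n [k]_q`. -/
noncomputable def qFact (q : ℝ) (n : ℕ) : ℝ := ∏ k ∈ Finset.range n, qNum q (k + 1)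

/-- The q-binomial coefficient `[n choose k]_q`. -/
noncomputable def qBinom (q : ℝ) (n k : ℕ) : ℝ := qFact q n / (qFact q k * qFact q (n - k))

/-- The Ward q-addition power `(x ⊕_q y)^n = ∑_{k=0}^n [n choose k]_q x^k y^(n-k)`. -/
noncomputable def wardPow (q : ℝ) (x y : ℂ) (n : ℕ) : ℂ :=
  ∑ k ∈ Finset.range (n + 1), (qBinom q n k : ℂ) * x ^ k * y ^ (n - k)

/-- The q-hyperbolic cosine `cosh_q(z) = ∑ z^(2n)/[2n]_q!`. -/
noncomputable def qCosh (q : ℝ) (z : ℂ) : ℂ := ∑' n : ℕ, z ^ (2 * n) / (qFact q (2 * n) : ℂ)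

/-- The q-hyperbolic sine `sinh_q(z) = ∑ z^(2n+1)/[2n+1]_q!`. -/
noncomputable def qSinh (q : ℝ) (z : ℂ) : ℂ :=
  ∑' n : ℕ, z ^ (2 * n + 1) / (qFact q (2 * n + 1) : ℂ)

lemma qNum_pos {q : ℝ} (hq0 : 0 < q) (hq1 : q < 1) (n : ℕ) : 0 < qNum q (n + 1) := by
  have h : q ^ (n + 1) < 1 := pow_lt_one₀ hq0.le hq1 (Nat.succ_ne_zero n)
  unfold qNum
  apply div_pos <;> linarith

lemma qFact_pos {q : ℝ} (hq0 : 0 < q) (hq1 : q < 1) (n : ℕ) : 0 < qFact q n := by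
  unfold qFact
  exact Finset.prod_pos fun k _ => qNum_pos hq0 hq1 k

lemma summable_aux {q : ℝ} (hq0 : 0 < q) (hq1 : q < 1) (x : ℂ)
    (hx : ‖x‖ < 1 / (1 - q)) :
    Summable fun n : ℕ => ‖x ^ n / (qFact q n : ℂ)‖ := by
  have hq' : 0 < 1 - q := by linarith
  set r : ℝ := ((1 - q) * ‖x‖ + 1) / 2 with hr
  have hxr : (1 - q) * ‖x‖ < 1 := by
    rw [lt_div_iff₀ hq'] at hx; nlinarith
  have hr1 : r < 1 := by rw [hr]; linarith
  have hr0 : 0 < r := by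
    have := norm_nonneg x
    rw [hr]; positivity
  have hlim : Tendsto (fun n : ℕ => qNum q (n + 1)) atTop (𝓝 (1 / (1 - q))) := by
    have h1 : Tendsto (fun n : ℕ => q ^ (n + 1)) atTop (𝓝 0) :=
      (tendsto_pow_atTop_nhds_zero_of_lt_one hq0.le hq1).comp (tendsto_add_atTop_nat 1)
    have := ((tendsto_const_nhds (x := (1:ℝ))).sub h1).div_const (1 - q)
    simpa [qNum] using this
  have hlt : ‖x‖ / r < 1 / (1 - q) := by
    rw [div_lt_div_iff₀ hr0 hq']
    nlinarith [norm_nonneg x]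
  have hev : ∀ᶠ n in atTop, ‖x‖ / r < qNum q (n + 1) :=
    hlim.eventually (eventually_gt_nhds hlt)
  apply summable_of_ratio_norm_eventually_le hr1
  filter_upwards [hev] with n hn
  simp only [norm_norm]
  have hFn : 0 < qFact q n := qFact_pos hq0 hq1 n
  have hFn1 : 0 < qFact q (n + 1) := qFact_pos hq0 hq1 (n + 1)
  have hFs : qFact q (n + 1) = qFact q n * qNum q (n + 1) := by
    unfold qFact; rw [Finset.prod_range_succ]
  have hqn : 0 < qNum q (n + 1) := qNum_pos hq0 hq1 n
  have e1 : ‖x ^ n / (qFact q n : ℂ)‖ = ‖x‖ ^ n / qFact q n := by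
    rw [norm_div, norm_pow, Complex.norm_real, Real.norm_eq_abs,
      abs_of_pos hFn]
  have e2 : ‖x ^ (n + 1) / (qFact q (n + 1) : ℂ)‖
      = ‖x‖ ^ (n + 1) / qFact q (n + 1) := by
    rw [norm_div, norm_pow, Complex.norm_real, Real.norm_eq_abs,
      abs_of_pos hFn1]
  rw [e1, e2, hFs]
  have e3 : ‖x‖ ^ (n + 1) / (qFact q n * qNum q (n + 1))
      = (‖x‖ / qNum q (n + 1)) * (‖x‖ ^ n / qFact q n) := by
    rw [pow_succ]; field_simp
  rw [e3]
  have h4 : ‖x‖ / qNum q (n + 1) ≤ r := by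
    rw [div_le_iff₀ hqn]
    rw [div_lt_iff₀ hr0] at hn
    nlinarith
  exact mul_le_mul_of_nonneg_right h4 (by positivity)

lemma sum_range_even_odd (a : ℕ → ℂ) (n : ℕ) :
    ∑ k ∈ range (2 * n + 1), a k
      = ∑ k ∈ range (n + 1), a (2 * k) + ∑ k ∈ range n, a (2 * k + 1) := by
  induction n with
  | zero => simp
  | succ n ih =>
    have h1 : 2 * (n + 1) + 1 = (2 * n + 1) + 1 + 1 := by ring
    rw [h1, Finset.sum_range_succ, Finset.sum_range_succ, ih,
      Finset.sum_range_succ (fun k => a (2 * k)) (n + 1),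
      Finset.sum_range_succ (fun k => a (2 * k + 1)) n]
    have h2 : 2 * (n + 1) = 2 * n + 1 + 1 := by ring
    rw [h2]
    ring

theorem stmt_3 (q : ℝ) (hq0 : 0 < q) (hq1 : q < 1) (x y : ℂ)
    (hx : ‖x‖ < 1 / (1 - q)) (hy : ‖y‖ < 1 / (1 - q)) :
    Summable (fun n : ℕ => ‖wardPow q x y (2 * n) / (qFact q (2 * n) : ℂ)‖) ∧
      ∑' n : ℕ, wardPow q x y (2 * n) / (qFact q (2 * n) : ℂ) =
        qCosh q x * qCosh q y + qSinh q x * qSinh q y := by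
  set f : ℕ → ℂ := fun n => x ^ n / (qFact q n : ℂ) with hfdef
  set g : ℕ → ℂ := fun n => y ^ n / (qFact q n : ℂ) with hgdef
  have hf : Summable fun n => ‖f n‖ := summable_aux hq0 hq1 x hx
  have hg : Summable fun n => ‖g n‖ := summable_aux hq0 hq1 y hy
  have hFne : ∀ n, (qFact q n : ℂ) ≠ 0 := fun n => by
    exact_mod_cast (qFact_pos hq0 hq1 n).ne'
  have hward : ∀ m, wardPow q x y m / (qFact q m : ℂ)
      = ∑ k ∈ range (m + 1), f k * g (m - k) := by
    intro m
    rw [wardPow, Finset.sum_div]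
    refine Finset.sum_congr rfl fun k hk => ?_
    rw [qBinom, hfdef, hgdef]
    push_cast
    field_simp [hFne]
  have hinj2 : Function.Injective (fun n : ℕ => 2 * n) := by
    intro a b h; simp only [] at h; omega
  have hh : Summable fun n => ‖∑ k ∈ range (n + 1), f k * g (n - k)‖ :=
    summable_norm_sum_mul_range_of_summable_norm hf hg
  have goal1 : Summable fun n : ℕ => ‖wardPow q x y (2 * n) / (qFact q (2 * n) : ℂ)‖ := by
    refine (hh.comp_injective hinj2).congr fun n => ?_
    simp only [Function.comp]
    exact congrArg norm (hward (2 * n)).symm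
  refine ⟨goal1, ?_⟩
  set F : ℕ → ℂ := fun n => f (2 * n) with hFdef
  set G : ℕ → ℂ := fun n => g (2 * n) with hGdef
  set Fo : ℕ → ℂ := fun n => f (2 * n + 1) with hFodef
  set Go : ℕ → ℂ := fun n => g (2 * n + 1) with hGodef
  have hF : Summable fun n => ‖F n‖ := hf.comp_injective hinj2
  have hG : Summable fun n => ‖G n‖ := hg.comp_injective hinj2
  have hinj2' : Function.Injective (fun n : ℕ => 2 * n + 1) := by
    intro a b h; simp only [] at h; omega
  have hFo : Summable fun n => ‖Fo n‖ := hf.comp_injective hinj2'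
  have hGo : Summable fun n => ‖Go n‖ := hg.comp_injective hinj2'
  set A : ℕ → ℂ := fun n => ∑ k ∈ range (n + 1), F k * G (n - k) with hAdef
  set C : ℕ → ℂ := fun n => ∑ k ∈ range (n + 1), Fo k * Go (n - k) with hCdef
  set B : ℕ → ℂ := fun n => ∑ k ∈ range n, Fo k * Go (n - 1 - k) with hBdef
  have hsplit : ∀ n, wardPow q x y (2 * n) / (qFact q (2 * n) : ℂ) = A n + B n := by
    intro n
    rw [hward (2 * n), sum_range_even_odd (fun k => f k * g (2 * n - k)) n]
    congr 1
    · refine Finset.sum_congr rfl fun k hk => ?_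
      have hk' : k ≤ n := Nat.lt_succ_iff.mp (Finset.mem_range.mp hk)
      have : 2 * n - 2 * k = 2 * (n - k) := by omega
      simp only [hAdef, hFdef, hGdef, this]
    · refine Finset.sum_congr rfl fun k hk => ?_
      have hk' : k < n := Finset.mem_range.mp hk
      have : 2 * n - (2 * k + 1) = 2 * (n - 1 - k) + 1 := by omega
      simp only [hBdef, hFodef, hGodef, this]
  have hA : Summable fun n => ‖A n‖ := summable_norm_sum_mul_range_of_summable_norm hF hG
  have hC : Summable fun n => ‖C n‖ := summable_norm_sum_mul_range_of_summable_norm hFo hGo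
  have hBC : ∀ n, B (n + 1) = C n := by
    intro n
    refine Finset.sum_congr rfl fun k hk => ?_
    have : n + 1 - 1 - k = n - k := by omega
    simp only [hBdef, hCdef, this]
  have hBsum : Summable B :=
    (summable_nat_add_iff 1).mp (hC.of_norm.congr fun n => (hBC n).symm)
  have hB0 : B 0 = 0 := by simp [hBdef]
  have hcc : qCosh q x * qCosh q y = ∑' n, A n :=
    tsum_mul_tsum_eq_tsum_sum_range_of_summable_norm hF hG
  have hss : qSinh q x * qSinh q y = ∑' n, C n :=
    tsum_mul_tsum_eq_tsum_sum_range_of_summable_norm hFo hGo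
  calc ∑' n : ℕ, wardPow q x y (2 * n) / (qFact q (2 * n) : ℂ)
      = ∑' n, (A n + B n) := tsum_congr hsplit
    _ = (∑' n, A n) + ∑' n, B n := Summable.tsum_add hA.of_norm hBsum
    _ = qCosh q x * qCosh q y + qSinh q x * qSinh q y := by
        rw [← hcc, Summable.tsum_eq_zero_add hBsum, hB0, zero_add, tsum_congr hBC, ← hss]
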